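/- If u⁺(t₀) ≤ u⁻(t₀) for some t₀ ∈ [α, β], then u⁺(t) ≤ u⁻(t) for all t ∈ [α, t₀]. -/

import Mathlib

open MeasureTheory Filter Set

/-- Integral-form Grönwall: if `w ≤ L * ∫_t^{t₁} w` on `[s,t₁]` with `w` continuous, `L ≥ 0`,
then `w ≤ 0` on `[s,t₁]`. -/
lemma gronwall_int_aux (w : ℝ → ℝ) (s t₁ L : ℝ) (hst : s ≤ t₁) (hL : 0 ≤ L)
    (hw : ContinuousOn w (Set.Icc s t₁))
    (hineq : ∀ t ∈ Set.Icc s t₁, w t ≤ L * ∫ r in t..t₁, w r) :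
    ∀ t ∈ Set.Icc s t₁, w t ≤ 0 := by
  set F : ℝ → ℝ := fun t => ∫ r in t..t₁, w r with hF
  have huIcc : Set.uIcc s t₁ = Set.Icc s t₁ := Set.uIcc_of_le hst
  have hwint : IntegrableOn w (Set.uIcc s t₁) := by
    rw [huIcc]; exact hw.integrableOn_compact isCompact_Icc
  have hFcont : ContinuousOn F (Set.Icc s t₁) := by
    rw [← huIcc]
    exact intervalIntegral.continuousOn_primitive_interval_left hwint
  set g : ℝ → ℝ := fun t => Real.exp (L * t) * F t with hg
  have hFt₁ : F t₁ = 0 := intervalIntegral.integral_same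
  -- derivative of F at interior points
  have hFderiv : ∀ x ∈ Set.Ioo s t₁, HasDerivAt F (-w x) x := by
    intro x hx
    have hmem : Set.Icc s t₁ ∈ nhds x := Icc_mem_nhds hx.1 hx.2
    have hcx : ContinuousAt w x := hw.continuousAt hmem
    apply intervalIntegral.integral_hasDerivAt_left
    · refine (hwint.mono ?_ le_rfl).intervalIntegrable
      rw [huIcc, Set.uIcc_of_le hx.2.le]
      exact Set.Icc_subset_Icc hx.1.le le_rfl
    · exact ⟨Set.Icc s t₁, hmem, hw.aestronglyMeasurable measurableSet_Icc⟩
    · exact hcx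
  have hgderiv : ∀ x ∈ Set.Ioo s t₁,
      HasDerivAt g (Real.exp (L * x) * (L * F x - w x)) x := by
    intro x hx
    have h1 : HasDerivAt (fun t => Real.exp (L * t)) (L * Real.exp (L * x)) x := by
      simpa [mul_comm, Function.comp_def] using (Real.hasDerivAt_exp (L * x)).comp x
        ((hasDerivAt_id x).const_mul L)
    have := h1.mul (hFderiv x hx)
    convert this using 1
    all_goals first | rfl | ring
  have hmono : MonotoneOn g (Set.Icc s t₁) := by
    apply monotoneOn_of_deriv_nonneg (convex_Icc s t₁)
    · exact ((Real.continuous_exp.comp (continuous_const.mul continuous_id)).continuousOn).mul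
        hFcont
    · intro x hx
      rw [interior_Icc] at hx
      exact ((hgderiv x hx).differentiableAt).differentiableWithinAt
    · intro x hx
      rw [interior_Icc] at hx
      rw [(hgderiv x hx).deriv]
      have := hineq x ⟨hx.1.le, hx.2.le⟩
      have : 0 ≤ L * F x - w x := by linarith [hineq x ⟨hx.1.le, hx.2.le⟩]
      positivity
  intro t ht
  have hgt : g t ≤ g t₁ := hmono ht (Set.right_mem_Icc.2 hst) ht.2
  have hgt₁ : g t₁ = 0 := by simp [hg, hFt₁]
  have hFt : F t ≤ 0 := by
    have hexp : 0 < Real.exp (L * t) := Real.exp_pos _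
    have h2 : Real.exp (L * t) * F t ≤ 0 := by
      have := hgt; rw [hgt₁] at this; exact this
    by_contra h
    push_neg at h
    nlinarith
  calc w t ≤ L * F t := hineq t ht
    _ ≤ 0 := mul_nonpos_of_nonneg_of_nonpos hL hFt

theorem stmt_12
    (a b c d : ℝ) (hab : a < b) (hcd : c < d)
    (f : ℝ → ℝ → ℝ)
    (hfcont : ContinuousOn (fun p : ℝ × ℝ => f p.1 p.2) (Set.Ioo a b ×ˢ Set.Ioo c d))
    (hflip : ∀ K : Set ℝ, K ⊆ Set.Ioo c d → IsCompact K →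
      ∃ L : ℝ, 0 ≤ L ∧ ∀ t ∈ Set.Ioo a b, ∀ x ∈ K, ∀ y ∈ K, |f t x - f t y| ≤ L * |x - y|)
    (α β : ℝ) (hαβ : α ≤ β) (hsub : Set.Icc α β ⊆ Set.Ioo a b)
    -- u⁺ = up, u⁻ = um, with a.e. derivatives dup, dum
    (up um dup dum : ℝ → ℝ)
    (hupmem : ∀ t ∈ Set.Icc α β, up t ∈ Set.Ioo c d)
    (hummem : ∀ t ∈ Set.Icc α β, um t ∈ Set.Ioo c d)
    -- absolute continuity: a.e. differentiability, integrable derivative, FTC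
    (hupderiv : ∀ᵐ t ∂(volume.restrict (Set.Icc α β)), HasDerivAt up (dup t) t)
    (humderiv : ∀ᵐ t ∂(volume.restrict (Set.Icc α β)), HasDerivAt um (dum t) t)
    (hupint : IntegrableOn dup (Set.Icc α β))
    (humint : IntegrableOn dum (Set.Icc α β))
    (hupftc : ∀ s t : ℝ, α ≤ s → s ≤ t → t ≤ β → up t = up s + ∫ r in s..t, dup r)
    (humftc : ∀ s t : ℝ, α ≤ s → s ≤ t → t ≤ β → um t = um s + ∫ r in s..t, dum r)
    -- differential inequalities, a.e. on (α, β)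
    (hupineq : ∀ᵐ t ∂(volume.restrict (Set.Ioo α β)), f t (up t) ≤ dup t)
    (humineq : ∀ᵐ t ∂(volume.restrict (Set.Ioo α β)), dum t ≤ f t (um t))
    (t₀ : ℝ) (ht₀ : t₀ ∈ Set.Icc α β) (hinit : up t₀ ≤ um t₀) :
    ∀ t ∈ Set.Icc α t₀, up t ≤ um t := by
  -- continuity of up and um on [α, β]
  have hupc : ContinuousOn up (Set.Icc α β) := by
    have h1 : ContinuousOn (fun x => up α + ∫ r in Set.Ioc α x, dup r) (Set.Icc α β) :=
      continuousOn_const.add (intervalIntegral.continuousOn_primitive hupint)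
    refine h1.congr ?_
    intro t ht
    rw [hupftc α t le_rfl ht.1 ht.2, intervalIntegral.integral_of_le ht.1]
  have humc : ContinuousOn um (Set.Icc α β) := by
    have h1 : ContinuousOn (fun x => um α + ∫ r in Set.Ioc α x, dum r) (Set.Icc α β) :=
      continuousOn_const.add (intervalIntegral.continuousOn_primitive humint)
    refine h1.congr ?_
    intro t ht
    rw [humftc α t le_rfl ht.1 ht.2, intervalIntegral.integral_of_le ht.1]
  set w : ℝ → ℝ := fun t => up t - um t with hw
  have hwc : ContinuousOn w (Set.Icc α β) := hupc.sub humc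
  -- the compact set and Lipschitz constant
  obtain ⟨L, hL0, hLip⟩ := hflip (up '' Set.Icc α β ∪ um '' Set.Icc α β)
    (by rintro x (⟨t, ht, rfl⟩ | ⟨t, ht, rfl⟩); exacts [hupmem t ht, hummem t ht])
    ((isCompact_Icc.image_of_continuousOn hupc).union
      (isCompact_Icc.image_of_continuousOn humc))
  -- a.e. inequalities transferred to Icc α β
  have hIoo_Icc : (volume.restrict (Set.Ioo α β)) = volume.restrict (Set.Icc α β) :=
    Measure.restrict_congr_set Ioo_ae_eq_Icc
  rw [hIoo_Icc] at hupineq humineq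
  -- main argument
  intro s hs
  by_contra hcon
  push_neg at hcon
  have hws : 0 < w s := sub_pos.2 hcon
  have hsαβ : s ∈ Set.Icc α β := ⟨hs.1, hs.2.trans ht₀.2⟩
  -- first point after s where w ≤ 0
  set S : Set ℝ := Set.Icc s t₀ ∩ w ⁻¹' Set.Iic 0 with hS
  have hSne : S.Nonempty := ⟨t₀, Set.right_mem_Icc.2 hs.2, sub_nonpos.2 hinit⟩
  have hSclosed : IsClosed S := by
    have : ContinuousOn w (Set.Icc s t₀) :=
      hwc.mono (Set.Icc_subset_Icc hs.1 ht₀.2)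
    exact this.preimage_isClosed_of_isClosed isClosed_Icc isClosed_Iic
  have hSbdd : BddBelow S := ⟨s, fun x hx => hx.1.1⟩
  set t₁ : ℝ := sInf S with ht₁def
  have ht₁S : t₁ ∈ S := hSclosed.csInf_mem hSne hSbdd
  have hst₁ : s ≤ t₁ := le_csInf hSne fun x hx => hx.1.1
  have ht₁β : t₁ ≤ β := ht₁S.1.2.trans ht₀.2
  have ht₁αβ : t₁ ∈ Set.Icc α β := ⟨hs.1.trans hst₁, ht₁β⟩
  have hwt₁ : w t₁ ≤ 0 := ht₁S.2
  -- w > 0 on [s, t₁)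
  have hwpos : ∀ r ∈ Set.Ico s t₁, 0 < w r := by
    intro r hr
    by_contra h
    push_neg at h
    have hrS : r ∈ S := ⟨⟨hr.1, hr.2.le.trans ht₁S.1.2⟩, h⟩
    exact absurd (csInf_le hSbdd hrS) (not_le.2 hr.2)
  -- the integral inequality
  have hkey : ∀ t ∈ Set.Icc s t₁, w t ≤ L * ∫ r in t..t₁, w r := by
    intro t ht
    have htαβ : Set.Icc t t₁ ⊆ Set.Icc α β := Set.Icc_subset_Icc (hs.1.trans ht.1) ht₁β
    have hne : ∀ᵐ r ∂(volume.restrict (Set.Icc t t₁)), r ≠ t₁ := by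
      refine Filter.Eventually.filter_mono (ae_mono Measure.restrict_le_self) ?_
      have h0 : {x : ℝ | ¬ x ≠ t₁} = {t₁} := by ext x; simp
      rw [ae_iff, h0]
      exact measure_singleton t₁
    have hmemae : ∀ᵐ r ∂(volume.restrict (Set.Icc t t₁)), r ∈ Set.Icc t t₁ :=
      ae_restrict_mem measurableSet_Icc
    have hup' : ∀ᵐ r ∂(volume.restrict (Set.Icc t t₁)), f r (up r) ≤ dup r :=
      ae_restrict_of_ae_restrict_of_subset htαβ hupineq
    have hum' : ∀ᵐ r ∂(volume.restrict (Set.Icc t t₁)), dum r ≤ f r (um r) :=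
      ae_restrict_of_ae_restrict_of_subset htαβ humineq
    have haeineq : ∀ᵐ r ∂(volume.restrict (Set.Icc t t₁)),
        -L * w r ≤ dup r - dum r := by
      filter_upwards [hne, hmemae, hup', hum'] with r hne hmem hup' hum'
      have hrαβ : r ∈ Set.Icc α β := htαβ hmem
      have hrw : 0 < w r := hwpos r ⟨ht.1.trans hmem.1, lt_of_le_of_ne hmem.2 hne⟩
      have hlip := hLip r (hsub hrαβ) (up r) (Or.inl ⟨r, hrαβ, rfl⟩)
        (um r) (Or.inr ⟨r, hrαβ, rfl⟩)
      rw [abs_of_pos hrw] at hlip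
      have := abs_le.1 hlip
      simp only [hw] at *
      linarith [this.1]
    have httop : t ≤ t₁ := ht.2
    have hupII : IntervalIntegrable dup volume t t₁ :=
      (hupint.mono (by rwa [Set.uIcc_of_le httop]) le_rfl).intervalIntegrable
    have humII : IntervalIntegrable dum volume t t₁ :=
      (humint.mono (by rwa [Set.uIcc_of_le httop]) le_rfl).intervalIntegrable
    have hwII : IntervalIntegrable (fun r => -L * w r) volume t t₁ := by
      apply ContinuousOn.intervalIntegrable
      exact (continuousOn_const.mul (hwc.mono (by rwa [Set.uIcc_of_le httop])))
    have hint := intervalIntegral.integral_mono_ae_restrict httop hwII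
      (hupII.sub humII) haeineq
    rw [intervalIntegral.integral_sub hupII humII] at hint
    have hup_eq : ∫ r in t..t₁, dup r = up t₁ - up t := by
      rw [hupftc t t₁ (hs.1.trans ht.1) httop ht₁β]; ring
    have hum_eq : ∫ r in t..t₁, dum r = um t₁ - um t := by
      rw [humftc t t₁ (hs.1.trans ht.1) httop ht₁β]; ring
    rw [hup_eq, hum_eq] at hint
    have hconst : ∫ r in t..t₁, -L * w r = -L * ∫ r in t..t₁, w r := by
      exact intervalIntegral.integral_const_mul _ _
    rw [hconst] at hint
    simp only [hw] at *
    linarith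
  -- apply the Grönwall lemma
  have := gronwall_int_aux w s t₁ L hst₁ hL0
    (hwc.mono (Set.Icc_subset_Icc hs.1 ht₁β)) hkey s (Set.left_mem_Icc.2 hst₁)
  linarith
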